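/- Ties force full extraction: let v* = max_l v_l and suppose at least two leaves attain the value v*. Let s be the least common ancestor of all leaves l with v_l = v*. Then in any fixed point of the tree bargaining equations, x_t = 1 for every proper descendant t of s (that is, the share equals 1 on every edge in the subtree rooted at s), and consequently w_s = v*. -/
import Mathlib


/-- A finite rooted tree, given by a parent function: the root is its own
parent, and every node reaches the root by iterating `parent`. -/
structure BTree where
  V : Type
  [instFintype : Fintype V]
  [instDecEq : DecidableEq V]
  root : V
  parent : V → V
  parent_root : parent root = root
  reaches_root : ∀ t : V, ∃ k : ℕ, parent^[k] t = root

attribute [instance] BTree.instFintype BTree.instDecEq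

/-- The children of a node `s`: the non-root nodes whose parent is `s`. -/
def BTree.children (T : BTree) (s : T.V) : Finset T.V :=
  Finset.univ.filter fun t => t ≠ T.root ∧ T.parent t = s

/-- A leaf is a node with no children. -/
def BTree.IsLeaf (T : BTree) (l : T.V) : Prop :=
  T.children l = ∅

/-- Maximum of `f` over a finite set `F`, with value `0` when `F` is empty. -/
noncomputable def fmax {α : Type*} (F : Finset α) (f : α → ℝ) : ℝ :=
  sSup (insert 0 (f '' (F : Set α)))

/-- `w` is the value function determined by leaf values `v` and shares `x`:
`w l = v l` at each leaf `l`, and `w s = max_{t ∈ children s} x t · w t` at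
each internal node `s`. -/
def IsValueFn (T : BTree) (v x w : T.V → ℝ) : Prop :=
  (∀ l, T.IsLeaf l → w l = v l) ∧
  ∀ s, ¬ T.IsLeaf s → w s = fmax (T.children s) fun t => x t * w t

/-- `wexcl T x w s t`: the maximum value reaching `s` from its children other
than `t` (`0` when `t` is the only child). -/
noncomputable def wexcl (T : BTree) (x w : T.V → ℝ) (s t : T.V) : ℝ :=
  fmax ((T.children s).erase t) fun t' => x t' * w t'

/-- A fixed point of the tree bargaining equations: `x` is a share vector
(`x root = 0`, `x t ∈ [0,1]` off the root), `w` is the induced value function,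
and for every non-root `t` with parent `s`:
`(1 − x t)·w t = (1 − x s)·(max(w_{s∖t}, x t · w t) − w_{s∖t})`. -/
def IsTreeFixedPoint (T : BTree) (v x w : T.V → ℝ) : Prop :=
  IsValueFn T v x w ∧
  x T.root = 0 ∧
  (∀ t, t ≠ T.root → 0 ≤ x t ∧ x t ≤ 1) ∧
  ∀ t, t ≠ T.root →
    (1 - x t) * w t =
      (1 - x (T.parent t)) *
        (max (wexcl T x w (T.parent t) t) (x t * w t) - wexcl T x w (T.parent t) t)

-- auxiliary lemmas

lemma mem_children_iff (T : BTree) {c s : T.V} :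
    c ∈ T.children s ↔ c ≠ T.root ∧ T.parent c = s := by
  simp [BTree.children]

lemma le_fmax {α : Type*} {F : Finset α} (f : α → ℝ) {a : α} (ha : a ∈ F) :
    f a ≤ fmax F f :=
  le_csSup (((F.finite_toSet).image f).insert 0).bddAbove
    (Set.mem_insert_iff.2 (Or.inr ⟨a, Finset.mem_coe.2 ha, rfl⟩))

lemma fmax_nonneg {α : Type*} (F : Finset α) (f : α → ℝ) : 0 ≤ fmax F f :=
  le_csSup (((F.finite_toSet).image f).insert 0).bddAbove (Set.mem_insert 0 _)

lemma fmax_le {α : Type*} {F : Finset α} {f : α → ℝ} {B : ℝ} (hB : 0 ≤ B)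
    (h : ∀ a ∈ F, f a ≤ B) : fmax F f ≤ B := by
  refine csSup_le (Set.insert_nonempty _ _) ?_
  rintro y (rfl | ⟨a, ha, rfl⟩)
  · exact hB
  · exact h a (Finset.mem_coe.1 ha)

lemma le_wexcl (T : BTree) (x w : T.V → ℝ) {s t c : T.V}
    (h : c ∈ (T.children s).erase t) : x c * w c ≤ wexcl T x w s t := by
  unfold wexcl; exact le_fmax (fun t' => x t' * w t') h

lemma wexcl_nonneg (T : BTree) (x w : T.V → ℝ) (s t : T.V) :
    0 ≤ wexcl T x w s t := by unfold wexcl; exact fmax_nonneg _ _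

noncomputable def BTree.depth (T : BTree) (t : T.V) : ℕ := Nat.find (T.reaches_root t)

lemma BTree.iterate_depth (T : BTree) (t : T.V) : T.parent^[T.depth t] t = T.root :=
  Nat.find_spec (T.reaches_root t)

lemma BTree.depth_lt_card (T : BTree) (t : T.V) : T.depth t < Fintype.card T.V := by
  have hmono : ∀ i j : ℕ, i < j → j ≤ T.depth t → T.parent^[i] t ≠ T.parent^[j] t := by
    intro i j hij hj hne
    have h1 : T.parent^[(T.depth t - j) + i] t = T.root := by
      have h2 : T.parent^[(T.depth t - j) + j] t = T.root := by
        rw [Nat.sub_add_cancel hj]; exact T.iterate_depth t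
      rw [Function.iterate_add_apply] at h2 ⊢
      rw [hne]; exact h2
    exact Nat.find_min (T.reaches_root t) (show _ < T.depth t by omega) h1
  have hinj : Function.Injective (fun i : Fin (T.depth t + 1) => T.parent^[(i : ℕ)] t) := by
    intro i j hij
    rcases lt_trichotomy i j with h | h | h
    · exact absurd hij (hmono i j h (Nat.lt_succ_iff.1 j.isLt))
    · exact h
    · exact absurd hij.symm (hmono j i h (Nat.lt_succ_iff.1 i.isLt))
  have := Fintype.card_le_of_injective _ hinj
  simp [Fintype.card_fin] at this
  omega

lemma BTree.depth_child (T : BTree) {c s : T.V} (h : c ∈ T.children s) :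
    T.depth s < T.depth c := by
  obtain ⟨hcr, hcp⟩ := (mem_children_iff T).1 h
  have h0 : T.depth c ≠ 0 := by
    intro h0
    have h1 := T.iterate_depth c
    rw [h0, Function.iterate_zero_apply] at h1
    exact hcr h1
  obtain ⟨m, hm⟩ : ∃ m, T.depth c = m + 1 := ⟨T.depth c - 1, by omega⟩
  have h2 : T.parent^[m] s = T.root := by
    have h1 := T.iterate_depth c
    rw [hm, Function.iterate_succ_apply, hcp] at h1
    exact h1
  have h3 : T.depth s ≤ m := Nat.find_min' (T.reaches_root s) h2
  omega

theorem BTree.up_induction (T : BTree) (P : T.V → Prop)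
    (h : ∀ s, (∀ c ∈ T.children s, P c) → P s) (t : T.V) : P t := by
  have key : ∀ n, ∀ u : T.V, Fintype.card T.V - T.depth u ≤ n → P u := by
    intro n
    induction n with
    | zero => intro u hu; exact absurd hu (by have := T.depth_lt_card u; omega)
    | succ n ih =>
      intro u hu
      refine h u fun c hc => ih c ?_
      have h1 := T.depth_child hc
      have h2 := T.depth_lt_card u
      omega
  exact key _ t le_rfl

/-- Ties force full extraction: if at least two leaves attain the maximum value
`vstar` and `s` is the least common ancestor of all maximum-value leaves, then
in any fixed point every proper descendant of `s` has share `1`, and `w s = vstar`. -/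
theorem tree_ties_full_extraction (T : BTree) (v x w : T.V → ℝ)
    (hv : ∀ l, T.IsLeaf l → 0 < v l) (hroot : ¬ T.IsLeaf T.root)
    (hfp : IsTreeFixedPoint T v x w)
    (vstar : ℝ) (hmax : ∀ l, T.IsLeaf l → v l ≤ vstar)
    (l1 l2 : T.V) (hne : l1 ≠ l2)
    (hl1 : T.IsLeaf l1) (hl2 : T.IsLeaf l2)
    (hv1 : v l1 = vstar) (hv2 : v l2 = vstar)
    (s : T.V)
    (hanc : ∀ l, T.IsLeaf l → v l = vstar → ∃ k : ℕ, T.parent^[k] l = s)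
    (hlca : ∀ a, (∀ l, T.IsLeaf l → v l = vstar → ∃ k : ℕ, T.parent^[k] l = a) →
      ∃ k : ℕ, T.parent^[k] s = a) :
    (∀ t, t ≠ s → (∃ k : ℕ, T.parent^[k] t = s) → x t = 1) ∧ w s = vstar := by
  obtain ⟨⟨hwleaf, hwint⟩, hxroot, hxbound, heq⟩ := hfp
  have hiterroot : ∀ k, T.parent^[k] T.root = T.root :=
    fun k => Function.iterate_fixed T.parent_root k
  have hvpos : 0 < vstar := hv1 ▸ hv l1 hl1
  -- positivity of w
  have hwpos : ∀ t, 0 < w t := by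
    refine T.up_induction _ ?_
    intro t ih
    by_cases hlf : T.IsLeaf t
    · rw [hwleaf t hlf]; exact hv t hlf
    · obtain ⟨c, hc⟩ : (T.children t).Nonempty :=
        Finset.nonempty_iff_ne_empty.2 hlf
      obtain ⟨hcr, hcp⟩ := (mem_children_iff T).1 hc
      have hwc := ih c hc
      have hxc : x c ≠ 0 := by
        intro h0
        have hE := wexcl_nonneg T x w t c
        have h1 := heq c hcr
        rw [hcp, h0, zero_mul, max_eq_left hE, sub_self, mul_zero, sub_zero, one_mul] at h1
        exact hwc.ne' h1
      have hxcpos : 0 < x c := lt_of_le_of_ne (hxbound c hcr).1 (Ne.symm hxc)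
      calc (0:ℝ) < x c * w c := mul_pos hxcpos hwc
        _ ≤ fmax (T.children t) (fun t' => x t' * w t') := le_fmax (fun t' => x t' * w t') hc
        _ = w t := (hwint t hlf).symm
  -- upper bound
  have hwle : ∀ t, w t ≤ vstar := by
    refine T.up_induction _ ?_
    intro t ih
    by_cases hlf : T.IsLeaf t
    · rw [hwleaf t hlf]; exact hmax t hlf
    · rw [hwint t hlf]
      refine fmax_le hvpos.le ?_
      intro c hc
      obtain ⟨hcr, _⟩ := (mem_children_iff T).1 hc
      have h1 := ih c hc
      have h2 := hxbound c hcr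
      nlinarith [(hwpos c).le]
  -- extracting the child of s on a path
  have exists_child : ∀ t, t ≠ s → (∃ k, T.parent^[k] t = s) →
      ∃ d m, d ∈ T.children s ∧ T.parent^[m] t = d := by
    intro t hts hex
    have hk := Nat.find_spec hex
    have hk1 : Nat.find hex ≠ 0 := by
      intro h; rw [h, Function.iterate_zero_apply] at hk; exact hts hk
    obtain ⟨m, hm⟩ : ∃ m, Nat.find hex = m + 1 := ⟨Nat.find hex - 1, by omega⟩
    rw [hm] at hk
    refine ⟨T.parent^[m] t, m, ?_, rfl⟩
    rw [mem_children_iff]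
    refine ⟨?_, by rw [← Function.iterate_succ_apply' T.parent m t]; exact hk⟩
    intro h
    have hs : s = T.root := by
      rw [← hk, Function.iterate_succ_apply', h, T.parent_root]
    exact Nat.find_min hex (by rw [hm]; exact m.lt_succ_self) (by rw [h, hs])
  -- s is not one of the two given leaves
  have hsl : ∀ la lb, T.IsLeaf la → T.IsLeaf lb → la ≠ lb → v lb = vstar → la ≠ s := by
    intro la lb hla hlb hab hvb h
    subst h
    obtain ⟨d, m, hd, _⟩ := exists_child lb (Ne.symm hab) (hanc lb hlb hvb)
    rw [BTree.IsLeaf] at hla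
    rw [hla] at hd
    simp at hd
  have hsl1 : l1 ≠ s := hsl l1 l2 hl1 hl2 hne hv2
  -- first child
  obtain ⟨c1, m1, hc1, hm1⟩ := exists_child l1 hsl1 (hanc l1 hl1 hv1)
  -- second child, distinct from the first, with a max leaf below it
  obtain ⟨l2', hl2', hv2', c2, m2, hc2, hm2, hc12⟩ :
      ∃ l2', T.IsLeaf l2' ∧ v l2' = vstar ∧
        ∃ c2 m2, c2 ∈ T.children s ∧ T.parent^[m2] l2' = c2 ∧ c2 ≠ c1 := by
    by_cases hall : ∀ l, T.IsLeaf l → v l = vstar → ∃ k, T.parent^[k] l = c1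
    · exfalso
      obtain ⟨k, hk⟩ := hlca c1 hall
      have hpc1 : T.parent c1 = s := ((mem_children_iff T).1 hc1).2
      have hcyc : T.parent^[k+1] s = s := by
        rw [Function.iterate_succ_apply', hk, hpc1]
      have hloop : ∀ n, T.parent^[n * (k+1)] s = s := by
        intro n
        induction n with
        | zero => simp
        | succ n ih =>
          rw [Nat.succ_mul, Function.iterate_add_apply, hcyc, ih]
      obtain ⟨K, hK⟩ := T.reaches_root s
      have hKle : K ≤ K * (k+1) := Nat.le_mul_of_pos_right K (Nat.succ_pos k)
      have hsr : s = T.root := by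
        have h1 : T.parent^[K * (k+1)] s = s := hloop K
        have h2 : T.parent^[K * (k+1)] s = T.root := by
          have h3 : K * (k+1) = (K * (k+1) - K) + K := by omega
          rw [h3, Function.iterate_add_apply, hK, hiterroot]
        rw [← h1, h2]
      exact ((mem_children_iff T).1 hc1).1 (by rw [← hk, hsr, hiterroot])
    · push_neg at hall
      obtain ⟨l', hl', hvl', hnotc1⟩ := hall
      have hls : l' ≠ s := by
        intro h
        have hlfs : T.IsLeaf s := h ▸ hl'
        rw [BTree.IsLeaf] at hlfs
        rw [hlfs] at hc1
        simp at hc1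
      obtain ⟨c2, m2, hc2, hm2⟩ := exists_child l' hls (hanc l' hl' hvl')
      refine ⟨l', hl', hvl', c2, m2, hc2, hm2, ?_⟩
      intro h
      exact hnotc1 m2 (by rw [hm2, h])
  -- propagation of x = 1 downward
  have hprop : ∀ u, u ≠ T.root → x u = 1 → ∀ k t, T.parent^[k] t = u → x t = 1 := by
    intro u hu hxu k
    induction k with
    | zero =>
      intro t ht
      rw [Function.iterate_zero_apply] at ht
      exact ht ▸ hxu
    | succ k ih =>
      intro t ht
      have htr : t ≠ T.root := by
        intro h; rw [h, hiterroot] at ht; exact hu ht.symm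
      have hpt : x (T.parent t) = 1 :=
        ih (T.parent t) (by rw [← Function.iterate_succ_apply]; exact ht)
      have h1 := heq t htr
      rw [hpt, sub_self, zero_mul] at h1
      rcases mul_eq_zero.1 h1 with h | h
      · linarith
      · exact absurd h (hwpos t).ne'
  -- going up a fully-extracting path preserves the value lower bound
  have hpathw : ∀ c, c ∈ T.children s → x c = 1 →
      ∀ m t, T.parent^[m] t = c → vstar ≤ w t → vstar ≤ w c := by
    intro c hc hxc m
    have hcr : c ≠ T.root := ((mem_children_iff T).1 hc).1
    induction m with
    | zero =>
      intro t ht hw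
      rw [Function.iterate_zero_apply] at ht
      exact ht ▸ hw
    | succ m ih =>
      intro t ht hwt
      have htr : t ≠ T.root := by
        intro h; rw [h, hiterroot] at ht; exact hcr ht.symm
      have hmem : t ∈ T.children (T.parent t) := (mem_children_iff T).2 ⟨htr, rfl⟩
      have hnl : ¬ T.IsLeaf (T.parent t) := by
        intro h; rw [BTree.IsLeaf] at h; rw [h] at hmem; simp at hmem
      have hxt : x t = 1 := hprop c hcr hxc (m+1) t ht
      have hwp : vstar ≤ w (T.parent t) := by
        rw [hwint _ hnl]
        calc vstar ≤ w t := hwt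
          _ = x t * w t := by rw [hxt, one_mul]
          _ ≤ fmax (T.children (T.parent t)) (fun t' => x t' * w t') := le_fmax (fun t' => x t' * w t') hmem
      exact ih (T.parent t) (by rw [← Function.iterate_succ_apply]; exact ht) hwp
  -- the weakly dominated competing child is fully extracted
  have key : ∀ c c' l', c ∈ T.children s → c' ∈ T.children s → c ≠ c' →
      T.IsLeaf l' → v l' = vstar → (∃ m, T.parent^[m] l' = c) →
      x c * w c ≤ x c' * w c' → x c = 1 ∧ w c = vstar := by
    rintro c c' l' hc hc' hcc' hl' hvl' ⟨m, hm⟩ hle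
    obtain ⟨hcr, hcp⟩ := (mem_children_iff T).1 hc
    have hE : x c' * w c' ≤ wexcl T x w s c :=
      le_wexcl T x w (Finset.mem_erase.2 ⟨Ne.symm hcc', hc'⟩)
    have heqc := heq c hcr
    rw [hcp, max_eq_left (le_trans hle hE), sub_self, mul_zero] at heqc
    have hxc : x c = 1 := by
      rcases mul_eq_zero.1 heqc with h | h
      · linarith
      · exact absurd h (hwpos c).ne'
    have hwc : vstar ≤ w c :=
      hpathw c hc hxc m l' hm (by rw [hwleaf l' hl', hvl'])
    exact ⟨hxc, le_antisymm (hwle c) hwc⟩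
  -- both competing children are fully extracted
  have main : ∀ c c' l', c ∈ T.children s → c' ∈ T.children s → c ≠ c' →
      T.IsLeaf l' → v l' = vstar → (∃ m, T.parent^[m] l' = c) →
      x c * w c ≤ x c' * w c' →
      (x c = 1 ∧ w c = vstar) ∧ (x c' = 1 ∧ w c' = vstar) := by
    intro c c' l' hc hc' hcc' hl' hvl' hm hle
    obtain ⟨hxc, hwc⟩ := key c c' l' hc hc' hcc' hl' hvl' hm hle
    have hcr' : c' ≠ T.root := ((mem_children_iff T).1 hc').1
    have hb := hxbound c' hcr'
    have h1 : x c' * w c' ≤ vstar := by nlinarith [(hwpos c').le, hwle c']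
    have h2 : vstar ≤ x c' * w c' := by rw [hxc, hwc, one_mul] at hle; exact hle
    have heqq : x c' * w c' = vstar := le_antisymm h1 h2
    have hwc' : w c' = vstar := by nlinarith [(hwpos c').le, hwle c']
    have hxc' : x c' = 1 := by
      rw [hwc'] at heqq
      have := hvpos.ne'
      field_simp at heqq
      exact heqq
    exact ⟨⟨hxc, hwc⟩, hxc', hwc'⟩
  obtain ⟨⟨hx1, hw1⟩, hx2, hw2⟩ :
      (x c1 = 1 ∧ w c1 = vstar) ∧ (x c2 = 1 ∧ w c2 = vstar) := by
    rcases le_total (x c1 * w c1) (x c2 * w c2) with h | h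
    · exact main c1 c2 l1 hc1 hc2 (Ne.symm hc12) hl1 hv1 ⟨m1, hm1⟩ h
    · exact (main c2 c1 l2' hc2 hc1 hc12 hl2' hv2' ⟨m2, hm2⟩ h).symm
  have hnls : ¬ T.IsLeaf s := by
    intro h; rw [BTree.IsLeaf] at h; rw [h] at hc1; simp at hc1
  have hws : w s = vstar := by
    rw [hwint s hnls]
    refine le_antisymm (fmax_le hvpos.le ?_) ?_
    · intro c hc
      obtain ⟨hcr, _⟩ := (mem_children_iff T).1 hc
      have h1 := hxbound c hcr
      nlinarith [(hwpos c).le, hwle c]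
    · calc vstar = x c1 * w c1 := by rw [hx1, hw1, one_mul]
        _ ≤ fmax (T.children s) (fun t' => x t' * w t') := le_fmax (fun t' => x t' * w t') hc1
  have hall_children : ∀ d, d ∈ T.children s → x d = 1 := by
    intro d hd
    by_cases hdc : d = c1
    · exact hdc ▸ hx1
    · obtain ⟨hdr, hdp⟩ := (mem_children_iff T).1 hd
      have hE : vstar ≤ wexcl T x w s d := by
        have h0 : x c1 * w c1 = vstar := by rw [hx1, hw1, one_mul]
        rw [← h0]
        exact le_wexcl T x w (Finset.mem_erase.2 ⟨fun h => hdc h.symm, hc1⟩)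
      have hb := hxbound d hdr
      have hyd : x d * w d ≤ wexcl T x w s d := by
        refine le_trans ?_ hE
        nlinarith [(hwpos d).le, hwle d]
      have heqd := heq d hdr
      rw [hdp, max_eq_left hyd, sub_self, mul_zero] at heqd
      rcases mul_eq_zero.1 heqd with h | h
      · linarith
      · exact absurd h (hwpos d).ne'
  refine ⟨?_, hws⟩
  intro t hts hpath
  obtain ⟨d, m, hd, hm⟩ := exists_child t hts hpath
  exact hprop d ((mem_children_iff T).1 hd).1 (hall_children d hd) m t hm
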